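/- Consider the Markov chain X on ℤ² with transitions: on the open cones K = {(x,y) : xy ≠ 0} it is a simple random walk (each neighbor with probability 1/4); on the axes K^c \ {(0,0)}, from (i,0) with i > 0 it moves to (i+1,0), (i,1), (i,−1) each with probability 1/(4 i^α) and to (i−1,0) with probability 1 − 3/(4 i^α), symmetrically on other half-axes; from (0,0) each neighbor has probability 1/4. Let ρ = inf{k > 0 : X_k ∈ K}. If α > 1 then there exists a constant C with 0 < C < 1 such that P_x(X_ρ = (1,1)) > C for every x ∈ K^c. -/
import Mathlib


open MeasureTheory Filter Asymptotics
open scoped Classical ENNReal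

noncomputable section

/-- The four open cones: both coordinates nonzero. -/
def coneK : Set (ℤ × ℤ) := {z | z.1 ≠ 0 ∧ z.2 ≠ 0}

/-- The axes (complement of the cones). -/
def axesKc : Set (ℤ × ℤ) := {z | z.1 = 0 ∨ z.2 = 0}

/-- Nearest-neighbour adjacency on `ℤ²`. -/
def adj (z w : ℤ × ℤ) : Prop := (w.1 - z.1).natAbs + (w.2 - z.2).natAbs = 1

/-- Maximum norm on `ℤ²`. -/
def onorm (z : ℤ × ℤ) : ℕ := max z.1.natAbs z.2.natAbs

/-- Transition probabilities of the perturbed walk: simple random walk on the cones and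
at the origin; on the axes, at distance `i > 0` from the origin, probability `1/(4 i^α)`
to step outward or sideways and `1 - 3/(4 i^α)` to step toward the origin. -/
noncomputable def q (α : ℝ) (z w : ℤ × ℤ) : ℝ :=
  if z.2 = 0 ∧ z.1 ≠ 0 then
    (if w = (z.1 + Int.sign z.1, 0) ∨ w = (z.1, 1) ∨ w = (z.1, -1) then
      1 / (4 * (z.1.natAbs : ℝ) ^ α)
    else if w = (z.1 - Int.sign z.1, 0) then
      1 - 3 / (4 * (z.1.natAbs : ℝ) ^ α)
    else 0)
  else if z.1 = 0 ∧ z.2 ≠ 0 then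
    (if w = (0, z.2 + Int.sign z.2) ∨ w = (1, z.2) ∨ w = (-1, z.2) then
      1 / (4 * (z.2.natAbs : ℝ) ^ α)
    else if w = (0, z.2 - Int.sign z.2) then
      1 - 3 / (4 * (z.2.natAbs : ℝ) ^ α)
    else 0)
  else (if adj z w then 1 / 4 else 0)

/-- A Markov chain on `ℤ²` with transition kernel `q α`: a family of probability
measures `P x` (the chain started at `x`) whose finite-dimensional distributions are
products of the transition probabilities. -/
structure PerturbedWalk (α : ℝ) (Ω : Type*) [MeasurableSpace Ω] where
  X : ℕ → Ω → ℤ × ℤ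
  P : ℤ × ℤ → Measure Ω
  meas : ∀ n, Measurable (X n)
  prob : ∀ x, IsProbabilityMeasure (P x)
  fdd : ∀ (x : ℤ × ℤ) (n : ℕ) (path : ℕ → ℤ × ℤ), path 0 = x →
    (P x {ω | ∀ i ≤ n, X i ω = path i}).toReal
      = ∏ i ∈ Finset.range n, q α (path i) (path (i + 1))

/-- `n` is the first time (after `0`) at which the walk is in the cones `K`;
i.e. `ρ = n` where `ρ` is the entrance time into `K`. -/
def entersConeAt {Ω : Type*} (X : ℕ → Ω → ℤ × ℤ) (n : ℕ) (ω : Ω) : Prop :=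
  0 < n ∧ X n ω ∈ coneK ∧ ∀ m, 0 < m → m < n → X m ω ∉ coneK

/-- `n` is the first time (after `0`) at which the walk is on the axes `K^c`;
i.e. `η = n` where `η` is the entrance time into `K^c`. -/
def entersAxesAt {Ω : Type*} (X : ℕ → Ω → ℤ × ℤ) (n : ℕ) (ω : Ω) : Prop :=
  0 < n ∧ X n ω ∈ axesKc ∧ ∀ m, 0 < m → m < n → X m ω ∉ axesKc

-- auxiliary
noncomputable def aa (α : ℝ) (j : ℕ) : ℝ := 3 / (4 * (j : ℝ) ^ α)

lemma rpow_ge_one (α : ℝ) (hα : 1 < α) (j : ℕ) (hj : 1 ≤ j) : (1:ℝ) ≤ (j:ℝ) ^ α := by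
  have h1 : (1:ℝ) ≤ (j:ℝ) := by exact_mod_cast hj
  calc (1:ℝ) = 1 ^ α := (Real.one_rpow α).symm
  _ ≤ (j:ℝ) ^ α := Real.rpow_le_rpow (by norm_num) h1 (by linarith)

lemma aa_nonneg (α : ℝ) (j : ℕ) : 0 ≤ aa α j := by
  unfold aa
  have : (0:ℝ) ≤ (j:ℝ) ^ α := Real.rpow_nonneg (by positivity) α
  positivity

lemma aa_le (α : ℝ) (hα : 1 < α) (j : ℕ) (hj : 1 ≤ j) : aa α j ≤ 3/4 := by
  unfold aa
  have h := rpow_ge_one α hα j hj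
  rw [div_le_div_iff₀ (by linarith) (by norm_num)]
  linarith

lemma one_sub_sum_le_prod (f : ℕ → ℝ) (h0 : ∀ i, 0 ≤ f i) (h1 : ∀ i, f i ≤ 1)
    (s : Finset ℕ) : 1 - ∑ i ∈ s, f i ≤ ∏ i ∈ s, (1 - f i) := by
  classical
  induction s using Finset.cons_induction with
  | empty => simp
  | cons i s hi ih =>
    rw [Finset.prod_cons, Finset.sum_cons]
    have hp : (0:ℝ) ≤ ∏ j ∈ s, (1 - f j) :=
      Finset.prod_nonneg fun j _ => by linarith [h1 j]
    have hs : (0:ℝ) ≤ ∑ j ∈ s, f j := Finset.sum_nonneg fun j _ => h0 j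
    nlinarith [h0 i, h1 i]

noncomputable def pathOf (x : ℤ × ℤ) (k : ℕ) : ℤ × ℤ :=
  if k ≤ onorm x then (x.1 - k * Int.sign x.1, x.2 - k * Int.sign x.2)
  else if k = onorm x + 1 then (1, 0) else (1, 1)

lemma pathOf_zero (x : ℤ × ℤ) : pathOf x 0 = x := by
  simp [pathOf]

lemma pathOf_onorm (x : ℤ × ℤ) (hx : x ∈ axesKc) : pathOf x (onorm x) = (0, 0) := by
  have h1 : x.1 - (onorm x : ℤ) * Int.sign x.1 = 0 ∧
      x.2 - (onorm x : ℤ) * Int.sign x.2 = 0 := by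
    rcases hx with h | h
    · have h2 : onorm x = x.2.natAbs := by simp [onorm, h]
      constructor
      · simp [h]
      · rw [h2, mul_comm, Int.sign_mul_natAbs]; ring
    · have h2 : onorm x = x.1.natAbs := by simp [onorm, h]
      constructor
      · rw [h2, mul_comm, Int.sign_mul_natAbs]; ring
      · simp [h]
  simp [pathOf, Prod.ext_iff, h1.1, h1.2]

lemma pathOf_succ_onorm (x : ℤ × ℤ) : pathOf x (onorm x + 1) = (1, 0) := by
  simp [pathOf]

lemma pathOf_top (x : ℤ × ℤ) (k : ℕ) (hk : onorm x + 1 < k) : pathOf x k = (1, 1) := by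
  rw [pathOf, if_neg (by omega), if_neg (by omega)]

lemma pathOf_mem_axes (x : ℤ × ℤ) (hx : x ∈ axesKc) (k : ℕ) (hk : k ≤ onorm x + 1) :
    pathOf x k ∈ axesKc := by
  rcases Nat.lt_or_ge k (onorm x + 1) with h | h
  · rw [pathOf, if_pos (by omega)]
    rcases hx with h1 | h1
    · left; simp [h1]
    · right; simp [h1]
  · have : k = onorm x + 1 := by omega
    rw [this, pathOf_succ_onorm]; right; rfl

lemma q_toward_h (α : ℝ) (i : ℤ) (hi : 0 < i) :
    q α (i, 0) (i - 1, 0) = 1 - aa α i.natAbs := by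
  have hs : Int.sign i = 1 := Int.sign_eq_one_iff_pos.mpr hi
  rw [q, if_pos ⟨rfl, by omega⟩, hs, if_neg (by simp only [Prod.mk.injEq]; omega), if_pos rfl]
  rfl

lemma q_toward_h' (α : ℝ) (i : ℤ) (hi : i < 0) :
    q α (i, 0) (i + 1, 0) = 1 - aa α i.natAbs := by
  have hs : Int.sign i = -1 := Int.sign_eq_neg_one_iff_neg.mpr hi
  rw [q, if_pos ⟨rfl, by omega⟩, hs, if_neg (by simp only [Prod.mk.injEq]; omega),
    if_pos (by simp only [Prod.mk.injEq]; exact ⟨by ring, trivial⟩)]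
  rfl

lemma q_toward_v (α : ℝ) (i : ℤ) (hi : 0 < i) :
    q α (0, i) (0, i - 1) = 1 - aa α i.natAbs := by
  have hs : Int.sign i = 1 := Int.sign_eq_one_iff_pos.mpr hi
  rw [q, if_neg (by simp), if_pos ⟨rfl, by omega⟩, hs,
    if_neg (by simp only [Prod.mk.injEq]; omega), if_pos rfl]
  rfl

lemma q_toward_v' (α : ℝ) (i : ℤ) (hi : i < 0) :
    q α (0, i) (0, i + 1) = 1 - aa α i.natAbs := by
  have hs : Int.sign i = -1 := Int.sign_eq_neg_one_iff_neg.mpr hi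
  rw [q, if_neg (by simp), if_pos ⟨rfl, by omega⟩, hs,
    if_neg (by simp only [Prod.mk.injEq]; omega), if_pos (by simp only [Prod.mk.injEq]; exact ⟨trivial, by ring⟩)]
  rfl

lemma q_origin (α : ℝ) : q α (0, 0) (1, 0) = 1 / 4 := by
  rw [q, if_neg (by simp), if_neg (by simp), if_pos (by simp [adj])]

lemma q_corner (α : ℝ) : q α (1, 0) (1, 1) = 1 / 4 := by
  rw [q, if_pos ⟨rfl, one_ne_zero⟩, if_pos (Or.inr (Or.inl rfl))]
  norm_num [Real.one_rpow]

lemma q_step (α : ℝ) (x : ℤ × ℤ) (hx : x ∈ axesKc) (k : ℕ) (hk : k < onorm x) :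
    q α (pathOf x k) (pathOf x (k + 1)) = 1 - aa α (onorm x - k) := by
  rcases hx with h1 | h2
  · -- x.1 = 0, so x.2 ≠ 0 (since onorm x > 0)
    have hm : onorm x = x.2.natAbs := by simp [onorm, h1]
    rcases lt_trichotomy x.2 0 with h | h | h
    · have hs : Int.sign x.2 = -1 := Int.sign_eq_neg_one_iff_neg.mpr h
      have e1 : pathOf x k = (0, x.2 + k) := by
        rw [pathOf, if_pos (by omega)]
        simp only [h1, hs, Int.sign_zero, Prod.mk.injEq]
        constructor <;> ring
      have e2 : pathOf x (k + 1) = (0, x.2 + k + 1) := by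
        rw [pathOf, if_pos (by omega)]
        simp only [h1, hs, Int.sign_zero, Prod.mk.injEq]
        constructor
        · ring
        · push_cast; ring
      rw [e1, e2]
      have hlt : x.2 + (k : ℤ) < 0 := by omega
      rw [q_toward_v' α (x.2 + k) hlt,
        show (x.2 + (k:ℤ)).natAbs = onorm x - k by omega]
    · exfalso; rw [hm] at hk; omega
    · have hs : Int.sign x.2 = 1 := Int.sign_eq_one_iff_pos.mpr h
      have e1 : pathOf x k = (0, x.2 - k) := by
        rw [pathOf, if_pos (by omega)]
        simp [h1, hs]
      have e2 : pathOf x (k + 1) = (0, x.2 - k - 1) := by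
        rw [pathOf, if_pos (by omega)]
        simp only [h1, hs, Int.sign_zero, Prod.mk.injEq]
        constructor
        · ring
        · push_cast; ring
      rw [e1, e2]
      have hlt : (0:ℤ) < x.2 - k := by omega
      rw [q_toward_v α (x.2 - k) hlt,
        show (x.2 - (k:ℤ)).natAbs = onorm x - k by omega]
  · have hm : onorm x = x.1.natAbs := by simp [onorm, h2]
    rcases lt_trichotomy x.1 0 with h | h | h
    · have hs : Int.sign x.1 = -1 := Int.sign_eq_neg_one_iff_neg.mpr h
      have e1 : pathOf x k = (x.1 + k, 0) := by
        rw [pathOf, if_pos (by omega)]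
        simp only [h2, hs, Int.sign_zero, Prod.mk.injEq]
        constructor <;> ring
      have e2 : pathOf x (k + 1) = (x.1 + k + 1, 0) := by
        rw [pathOf, if_pos (by omega)]
        simp only [h2, hs, Int.sign_zero, Prod.mk.injEq]
        constructor
        · push_cast; ring
        · ring
      rw [e1, e2]
      have hlt : x.1 + (k : ℤ) < 0 := by omega
      rw [q_toward_h' α (x.1 + k) hlt,
        show (x.1 + (k:ℤ)).natAbs = onorm x - k by omega]
    · exfalso; rw [hm] at hk; omega
    · have hs : Int.sign x.1 = 1 := Int.sign_eq_one_iff_pos.mpr h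
      have e1 : pathOf x k = (x.1 - k, 0) := by
        rw [pathOf, if_pos (by omega)]
        simp [h2, hs]
      have e2 : pathOf x (k + 1) = (x.1 - k - 1, 0) := by
        rw [pathOf, if_pos (by omega)]
        simp only [h2, hs, Int.sign_zero, Prod.mk.injEq]
        constructor
        · push_cast; ring
        · ring
      rw [e1, e2]
      have hlt : (0:ℤ) < x.1 - k := by omega
      rw [q_toward_h α (x.1 - k) hlt,
        show (x.1 - (k:ℤ)).natAbs = onorm x - k by omega]

lemma prod_pathOf (α : ℝ) (x : ℤ × ℤ) (hx : x ∈ axesKc) :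
    ∏ k ∈ Finset.range (onorm x + 2), q α (pathOf x k) (pathOf x (k + 1))
      = (∏ k ∈ Finset.range (onorm x), (1 - aa α (k + 1))) * (1 / 16) := by
  rw [Finset.prod_range_succ, Finset.prod_range_succ]
  rw [pathOf_onorm x hx, pathOf_succ_onorm x, pathOf_top x _ (by omega), q_origin, q_corner]
  have hmain : ∏ k ∈ Finset.range (onorm x), q α (pathOf x k) (pathOf x (k + 1))
      = ∏ k ∈ Finset.range (onorm x), (1 - aa α (k + 1)) := by
    rw [Finset.prod_congr rfl (fun k hk => q_step α x hx k (Finset.mem_range.mp hk))]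
    rw [← Finset.prod_range_reflect (fun j => 1 - aa α (j + 1)) (onorm x)]
    refine Finset.prod_congr rfl (fun k hk => ?_)
    have h := Finset.mem_range.mp hk
    have : onorm x - k = onorm x - 1 - k + 1 := by omega
    rw [this]
  rw [hmain]; ring


set_option maxHeartbeats 1000000 in
/-- For `α > 1`, there is `0 < C < 1` with `P_x(X_ρ = (1,1)) > C` for every `x ∈ K^c`. -/
theorem exit_at_one_one_unif (α : ℝ) (hα : 1 < α) {Ω : Type*} [MeasurableSpace Ω]
    (W : PerturbedWalk α Ω) :
    ∃ C : ℝ, 0 < C ∧ C < 1 ∧ ∀ x ∈ axesKc,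
      C < (W.P x {ω | ∃ n, entersConeAt W.X n ω ∧ W.X n ω = (1, 1)}).toReal := by
  -- the weight sequence
  set b : ℕ → ℝ := fun k => aa α (k + 1) with hb
  have hb0 : ∀ k, 0 ≤ b k := fun k => aa_nonneg α (k + 1)
  have hb1 : ∀ k, b k ≤ 3 / 4 := fun k => aa_le α hα (k + 1) (by omega)
  have hb1' : ∀ k, b k ≤ 1 := fun k => by linarith [hb1 k]
  have hfac : ∀ k, (1 : ℝ) / 4 ≤ 1 - b k := fun k => by linarith [hb1 k]
  -- summability
  have hsum : Summable b := by
    have h1 : Summable (fun n : ℕ => 1 / (n : ℝ) ^ α) :=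
      Real.summable_one_div_nat_rpow.mpr hα
    have h2 : Summable (fun n : ℕ => 1 / ((n + 1 : ℕ) : ℝ) ^ α) :=
      (summable_nat_add_iff 1).mpr h1
    have h3 := h2.mul_left (3 / 4)
    refine h3.congr fun k => ?_
    simp only [hb, aa]
    ring
  -- tail bound
  obtain ⟨N, hN⟩ : ∃ N : ℕ, ∀ m : ℕ, ∑ k ∈ Finset.Ico N m, b k ≤ 1 / 2 := by
    have ht := hsum.hasSum.tendsto_sum_nat
    obtain ⟨N, hN⟩ := (Metric.tendsto_atTop.mp ht) (1 / 2) (by norm_num)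
    refine ⟨N, fun m => ?_⟩
    rcases le_or_gt N m with h | h
    · rw [Finset.sum_Ico_eq_sub _ h]
      have hSm : ∑ k ∈ Finset.range m, b k ≤ ∑' k, b k :=
        Summable.sum_le_tsum _ (fun i _ => hb0 i) hsum
      have hd := hN N le_rfl
      rw [Real.dist_eq, abs_lt] at hd
      linarith [hd.1]
    · rw [Finset.Ico_eq_empty (by omega)]
      simp
  set D : ℝ := ∏ k ∈ Finset.range N, (1 - b k) with hD
  have hD0 : 0 < D := Finset.prod_pos fun k _ => by linarith [hfac k]
  have hD1 : D ≤ 1 := Finset.prod_le_one (fun k _ => by linarith [hfac k])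
    (fun k _ => by linarith [hb0 k])
  -- uniform lower bound on the partial products
  have key : ∀ m : ℕ, D / 2 ≤ ∏ k ∈ Finset.range m, (1 - b k) := by
    intro m
    rcases le_or_gt N m with h | h
    · rw [← Finset.prod_range_mul_prod_Ico _ h]
      have h2 : 1 - ∑ k ∈ Finset.Ico N m, b k ≤ ∏ k ∈ Finset.Ico N m, (1 - b k) :=
        one_sub_sum_le_prod b hb0 hb1' _
      have h3 : (1 : ℝ) / 2 ≤ ∏ k ∈ Finset.Ico N m, (1 - b k) := by
        linarith [hN m]
      nlinarith
    · have h4 : D = (∏ k ∈ Finset.range m, (1 - b k)) * ∏ k ∈ Finset.Ico m N, (1 - b k) := by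
        rw [hD, ← Finset.prod_range_mul_prod_Ico _ (le_of_lt h)]
      have h5 : ∏ k ∈ Finset.Ico m N, (1 - b k) ≤ 1 :=
        Finset.prod_le_one (fun k _ => by linarith [hfac k]) (fun k _ => by linarith [hb0 k])
      have h6 : (0 : ℝ) ≤ ∏ k ∈ Finset.range m, (1 - b k) :=
        Finset.prod_nonneg fun k _ => by linarith [hfac k]
      nlinarith
  refine ⟨D / 64, by positivity, by linarith, fun x hx => ?_⟩
  haveI := W.prob x
  -- the explicit path event
  set n : ℕ := onorm x + 2 with hn
  have hfdd := W.fdd x n (pathOf x) (pathOf_zero x)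
  have hprod : (W.P x {ω | ∀ i ≤ n, W.X i ω = pathOf x i}).toReal
      = (∏ k ∈ Finset.range (onorm x), (1 - b k)) * (1 / 16) := by
    rw [hfdd, hn, prod_pathOf α x hx]
  have hsub : {ω | ∀ i ≤ n, W.X i ω = pathOf x i}
      ⊆ {ω | ∃ n, entersConeAt W.X n ω ∧ W.X n ω = (1, 1)} := by
    intro ω hω
    have hXn : W.X n ω = (1, 1) := by
      rw [hω n le_rfl]; exact pathOf_top x n (by omega)
    refine ⟨n, ⟨by omega, ?_, ?_⟩, hXn⟩
    · rw [hXn]; exact ⟨one_ne_zero, one_ne_zero⟩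
    · intro j hj0 hjn hmem
      have hax : pathOf x j ∈ axesKc := pathOf_mem_axes x hx j (by omega)
      rw [hω j (by omega)] at hmem
      rcases hax with h | h
      · exact hmem.1 h
      · exact hmem.2 h
  have hle : (W.P x {ω | ∀ i ≤ n, W.X i ω = pathOf x i}).toReal
      ≤ (W.P x {ω | ∃ n, entersConeAt W.X n ω ∧ W.X n ω = (1, 1)}).toReal :=
    ENNReal.toReal_mono (measure_ne_top _ _) (measure_mono hsub)
  have hkey := key (onorm x)
  have : D / 64 < (∏ k ∈ Finset.range (onorm x), (1 - b k)) * (1 / 16) := by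
    nlinarith
  linarith [hprod ▸ hle]

end
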